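/- Suppose there exists a κ-crowded, κ-entangled set of reals E with a nontrivial autohomeomorphism. Then there exist two homeomorphic sets of reals A and B such that A is κ-entangled but B is not (κ, 2)-entangled. -/

import Mathlib

open Cardinal

def Realizes {n : ℕ} (t : Fin n → Bool) (e e' : Fin n → ℝ) : Prop :=
  (∀ i, t i = true ↔ e' i < e i) ∨ (∀ i, t i = true ↔ e i < e' i)

/-- `E ⊆ ℝ` is `(κ, n)`-entangled. -/
def EntangledSet (κ : Cardinal) (n : ℕ) (E : Set ℝ) : Prop :=
  κ ≤ #E ∧
  ∀ F : Set (Fin n → ℝ),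
    (∀ e ∈ F, ∀ i, e i ∈ E) →
    (∀ e ∈ F, Function.Injective e) →
    (F.Pairwise fun e e' => ∀ i j, e i ≠ e' j) →
    #F = κ →
    ∀ t : Fin n → Bool, ∃ e ∈ F, ∃ e' ∈ F, e ≠ e' ∧ Realizes t e e'

/-- `E ⊆ ℝ` is κ-crowded: every open set meeting `E` meets it in ≥ κ points. -/
def Crowded (κ : Cardinal) (E : Set ℝ) : Prop :=
  ∀ U : Set ℝ, IsOpen U → (U ∩ E).Nonempty → κ ≤ #(U ∩ E : Set ℝ)

open Set Metric

lemma openMap_inclusion {X : Type*} [TopologicalSpace X] {s r U : Set X}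
    (hsr : s ⊆ r) (hU : IsOpen U) (hsU : s ⊆ U) (hrU : r ∩ U ⊆ s) :
    IsOpenMap (Set.inclusion hsr) := by
  intro O hO
  rw [isOpen_induced_iff] at hO
  obtain ⟨O', hO', rfl⟩ := hO
  have key : Set.inclusion hsr '' (Subtype.val ⁻¹' O') =
      (Subtype.val : r → X) ⁻¹' (O' ∩ U) := by
    ext ⟨a, ha⟩
    simp only [Set.mem_image, Set.mem_preimage, Set.mem_inter_iff]
    constructor
    · rintro ⟨⟨x, hx⟩, hxO, h2⟩
      have hxa : x = a := congrArg Subtype.val h2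
      subst hxa
      exact ⟨hxO, hsU hx⟩
    · rintro ⟨haO, haU⟩
      exact ⟨⟨a, hrU ⟨ha, haU⟩⟩, haO, rfl⟩
  rw [key]
  exact (hO'.inter hU).preimage continuous_subtype_val

noncomputable def sumHomeoOfSeparated {X : Type*} [TopologicalSpace X] {s t U W : Set X}
    (hU : IsOpen U) (hW : IsOpen W) (hsU : s ⊆ U) (htW : t ⊆ W)
    (htU : t ∩ U = ∅) (hsW : s ∩ W = ∅) : (↥s ⊕ ↥t) ≃ₜ ↥(s ∪ t) := by
  have hbij : Function.Bijective
      (Sum.elim (Set.inclusion (Set.subset_union_left : s ⊆ s ∪ t))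
        (Set.inclusion (Set.subset_union_right : t ⊆ s ∪ t))) := by
    constructor
    · rintro (⟨a, ha⟩ | ⟨a, ha⟩) (⟨b, hb⟩ | ⟨b, hb⟩) hab <;>
        have hv : a = b := congrArg Subtype.val hab
      · subst hv; rfl
      · exfalso; subst hv
        have hh : a ∈ t ∩ U := ⟨hb, hsU ha⟩
        rw [htU] at hh; exact hh
      · exfalso; subst hv
        have hh : a ∈ t ∩ U := ⟨ha, hsU hb⟩
        rw [htU] at hh; exact hh
      · subst hv; rfl
    · rintro ⟨a, ha | ha⟩
      · exact ⟨Sum.inl ⟨a, ha⟩, rfl⟩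
      · exact ⟨Sum.inr ⟨a, ha⟩, rfl⟩
  refine Equiv.toHomeomorphOfContinuousOpen (Equiv.ofBijective _ hbij) ?_ ?_
  · exact Continuous.sumElim (continuous_inclusion _) (continuous_inclusion _)
  · refine IsOpenMap.sumElim ?_ ?_
    · exact openMap_inclusion _ hU hsU (by
        rintro x ⟨hx | hx, hxU⟩
        · exact hx
        · have hh : x ∈ t ∩ U := ⟨hx, hxU⟩
          rw [htU] at hh; exact hh.elim)
    · exact openMap_inclusion _ hW htW (by
        rintro x ⟨hx | hx, hxW⟩
        · have hh : x ∈ s ∩ W := ⟨hx, hxW⟩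
          rw [hsW] at hh; exact hh.elim
        · exact hx)

/-- From a κ-crowded, κ-entangled set of reals with a nontrivial
autohomeomorphism, one obtains homeomorphic `A, B ⊆ ℝ` with `A` κ-entangled
and `B` not `(κ, 2)`-entangled. -/
theorem homeomorphic_entangled_non_entangled (κ : Cardinal) (hκ : ℵ₀ ≤ κ)
    (E : Set ℝ) (hcrowd : Crowded κ E)
    (hent : ∀ n : ℕ, 1 ≤ n → EntangledSet κ n E)
    (h : ∃ f : E ≃ₜ E, f ≠ Homeomorph.refl E) :
    ∃ A B : Set ℝ, Nonempty (A ≃ₜ B) ∧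
      (∀ n : ℕ, 1 ≤ n → EntangledSet κ n A) ∧ ¬EntangledSet κ 2 B := by
  obtain ⟨f, hf⟩ := h
  -- a point moved by `f`
  have hx : ∃ x : E, f x ≠ x := by
    by_contra hc
    push_neg at hc
    exact hf (Homeomorph.ext fun z => by simp [hc z])
  obtain ⟨x, hxne⟩ := hx
  set p : ℝ := (x : ℝ) with hp
  set q : ℝ := ((f x : E) : ℝ) with hq
  have hpq : p ≠ q := fun hpq => hxne (Subtype.ext hpq.symm)
  set δ : ℝ := dist p q / 2 with hδdef
  have hδ : 0 < δ := by
    have := dist_pos.mpr hpq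
    positivity
  have hcont : ContinuousAt (fun z : E => ((f z : E) : ℝ)) x :=
    (continuous_subtype_val.comp f.continuous).continuousAt
  obtain ⟨ε, hε, hεball⟩ := Metric.continuousAt_iff.mp hcont δ hδ
  set ι : ℝ := min ε δ with hιdef
  have hι : 0 < ι := lt_min hε hδ
  set I : Set ℝ := ball p ι with hIdef
  set D : Set ℝ := I ∩ E with hDdef
  set c : ℝ := 4 * δ with hcdef
  set D' : Set ℝ := (fun y => y + c) '' D with hD'def
  set V' : Set ℝ := (fun z : E => ((f z : E) : ℝ)) '' {z : E | (z : ℝ) ∈ I} with hV'def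
  have hDI : D ⊆ ball p δ := fun y hy => ball_subset_ball (min_le_right ε δ) hy.1
  have hDE : D ⊆ E := fun y hy => hy.2
  have hV'E : V' ⊆ E := by rintro _ ⟨z, hz, rfl⟩; exact (f z).2
  have hfI : ∀ z : E, (z : ℝ) ∈ I → ((f z : E) : ℝ) ∈ ball q δ := by
    intro z hz
    have hdist : dist z x < ε := by
      rw [Subtype.dist_eq]
      exact lt_of_lt_of_le (mem_ball.mp hz) (min_le_left ε δ)
    have hb := hεball hdist
    simpa [mem_ball] using hb
  have hV'q : V' ⊆ ball q δ := by rintro _ ⟨z, hz, rfl⟩; exact hfI z hz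
  have hD'ball : D' ⊆ ball (p + c) δ := by
    rintro _ ⟨d, hd, rfl⟩
    have hdd : dist (d + c) (p + c) = dist d p := by
      rw [Real.dist_eq, Real.dist_eq]; ring_nf
    rw [mem_ball, hdd]
    exact mem_ball.mp (hDI hd)
  have hdisjpq : Disjoint (ball p δ) (ball q δ) :=
    ball_disjoint_ball (by rw [hδdef]; linarith)
  have hdistpc : dist p (p + c) = c := by
    rw [Real.dist_eq, show p - (p + c) = -c by ring, abs_neg,
      abs_of_nonneg (by positivity : (0:ℝ) ≤ c)]
  have hdisjpc : Disjoint (ball p δ) (ball (p + c) δ) :=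
    ball_disjoint_ball (by rw [hdistpc, hcdef]; linarith)
  have hV'p : V' ∩ ball p δ = ∅ := by
    apply eq_empty_iff_forall_notMem.mpr
    rintro y ⟨hy1, hy2⟩
    exact (Set.disjoint_left.mp hdisjpq) hy2 (hV'q hy1)
  have hDq : D ∩ ball q δ = ∅ := by
    apply eq_empty_iff_forall_notMem.mpr
    rintro y ⟨hy1, hy2⟩
    exact (Set.disjoint_left.mp hdisjpq) (hDI hy1) hy2
  have hD'p : D' ∩ ball p δ = ∅ := by
    apply eq_empty_iff_forall_notMem.mpr
    rintro y ⟨hy1, hy2⟩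
    exact (Set.disjoint_left.mp hdisjpc) hy2 (hD'ball hy1)
  have hDpc : D ∩ ball (p + c) δ = ∅ := by
    apply eq_empty_iff_forall_notMem.mpr
    rintro y ⟨hy1, hy2⟩
    exact (Set.disjoint_left.mp hdisjpc) (hDI hy1) hy2
  have hDnotD' : ∀ y, y ∈ D → y ∉ D' := by
    intro y hy hy'
    exact (Set.disjoint_left.mp hdisjpc) (hDI hy) (hD'ball hy')
  have hκD : κ ≤ #D := hcrowd I isOpen_ball ⟨p, mem_ball_self hι, x.2⟩
  -- the homeomorphism piece `V' ≃ₜ D'`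
  have hD'sub : ∀ w, w ∈ D' → w - c ∈ D := by
    rintro _ ⟨d, hd, rfl⟩; simpa using hd
  have hmem1 : ∀ (w : ℝ) (hw : w ∈ V'), ((f.symm ⟨w, hV'E hw⟩ : E) : ℝ) + c ∈ D' := by
    intro w hw
    obtain ⟨z, hz, hzw⟩ := id hw
    have hzw' : (⟨w, hV'E hw⟩ : E) = f z := Subtype.ext hzw.symm
    rw [hzw', f.symm_apply_apply]
    exact ⟨(z : ℝ), ⟨hz, z.2⟩, rfl⟩
  have hmem2 : ∀ (w : ℝ) (hw : w ∈ D'), ((f ⟨w - c, (hD'sub w hw).2⟩ : E) : ℝ) ∈ V' :=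
    fun w hw => ⟨⟨w - c, (hD'sub w hw).2⟩, (hD'sub w hw).1, rfl⟩
  have e₂ : ↥V' ≃ₜ ↥D' :=
    { toFun := fun v => ⟨((f.symm ⟨(v : ℝ), hV'E v.2⟩ : E) : ℝ) + c, hmem1 v v.2⟩
      invFun := fun w => ⟨((f ⟨(w : ℝ) - c, (hD'sub w w.2).2⟩ : E) : ℝ), hmem2 w w.2⟩
      left_inv := by
        rintro ⟨w, hw⟩
        apply Subtype.ext
        simp
      right_inv := by
        rintro ⟨w, hw⟩
        apply Subtype.ext
        simp
      continuous_toFun := by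
        apply Continuous.subtype_mk
        exact (continuous_subtype_val.comp (f.symm.continuous.comp
          (Continuous.subtype_mk continuous_subtype_val _))).add continuous_const
      continuous_invFun := by
        apply Continuous.subtype_mk
        exact continuous_subtype_val.comp (f.continuous.comp
          (Continuous.subtype_mk (continuous_subtype_val.sub continuous_const) _)) }
  have homeoA : (↥D ⊕ ↥V') ≃ₜ ↥(D ∪ V') :=
    sumHomeoOfSeparated isOpen_ball isOpen_ball hDI hV'q hV'p hDq
  have homeoB : (↥D ⊕ ↥D') ≃ₜ ↥(D ∪ D') :=
    sumHomeoOfSeparated isOpen_ball isOpen_ball hDI hD'ball hD'p hDpc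
  have homeo : ↥(D ∪ V') ≃ₜ ↥(D ∪ D') :=
    homeoA.symm.trans ((Homeomorph.sumCongr (Homeomorph.refl ↥D) e₂).trans homeoB)
  refine ⟨D ∪ V', D ∪ D', ⟨homeo⟩, ?_, ?_⟩
  · -- A is κ-entangled
    intro n hn
    obtain ⟨hE1, hE2⟩ := hent n hn
    refine ⟨le_trans hκD (Cardinal.mk_le_mk_of_subset Set.subset_union_left), ?_⟩
    intro F hFmem hFinj hFpair hFκ t
    exact hE2 F (fun e he i => (Set.union_subset hDE hV'E) (hFmem e he i))
      hFinj hFpair hFκ t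
  · -- B is not (κ,2)-entangled
    rintro ⟨-, hB2⟩
    obtain ⟨S, hSD, hSκ⟩ := Cardinal.le_mk_iff_exists_subset.mp hκD
    set g : ℝ → (Fin 2 → ℝ) := fun d => ![d, d + c] with hgdef
    have hginj : Function.Injective g := by
      intro a b hab
      have h0 := congrFun hab 0
      simpa [hgdef] using h0
    have h1 : ∀ e ∈ g '' S, ∀ i, e i ∈ D ∪ D' := by
      rintro _ ⟨d, hd, rfl⟩ i
      fin_cases i
      · simp only [hgdef, Matrix.cons_val_zero]
        exact Or.inl (hSD hd)
      · simp only [hgdef, Matrix.cons_val_one, Matrix.head_cons]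
        exact Or.inr ⟨d, hSD hd, rfl⟩
    have h2 : ∀ e ∈ g '' S, Function.Injective e := by
      rintro _ ⟨d, hd, rfl⟩ i j hij
      fin_cases i <;> fin_cases j
      · rfl
      · exfalso
        have hij' : d = d + c := hij
        linarith
      · exfalso
        have hij' : d + c = d := hij
        linarith
      · rfl
    have h3 : (g '' S).Pairwise fun e e' => ∀ i j, e i ≠ e' j := by
      rintro _ ⟨d, hd, rfl⟩ _ ⟨d', hd', rfl⟩ hne i j
      have hdd : d ≠ d' := fun hh => hne (by rw [hh])
      fin_cases i <;> fin_cases j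
      · show d ≠ d'
        exact hdd
      · show d ≠ d' + c
        intro hh
        exact hDnotD' d (hSD hd) (by rw [hh]; exact ⟨d', hSD hd', rfl⟩)
      · show d + c ≠ d'
        intro hh
        exact hDnotD' d' (hSD hd') (by rw [← hh]; exact ⟨d, hSD hd, rfl⟩)
      · show d + c ≠ d' + c
        intro hh
        exact hdd (by linarith)
    have h4 : #(g '' S) = κ := by
      rw [Cardinal.mk_image_eq hginj, hSκ]
    obtain ⟨e, he, e', he', hne, hreal⟩ := hB2 (g '' S) h1 h2 h3 h4 ![true, false]
    obtain ⟨d, hd, rfl⟩ := he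
    obtain ⟨d', hd', rfl⟩ := he'
    rcases hreal with H | H
    · have H0 := H 0
      have H1 := H 1
      simp [hgdef] at H0 H1
      linarith
    · have H0 := H 0
      have H1 := H 1
      simp [hgdef] at H0 H1
      linarith
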